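/- Let A be a complex 2×2 matrix with tr A = 0. Then √|det A| equals the infimum, over all invertible complex 2×2 matrices Ω, of the operator norm ‖Ω·A·Ω⁻¹‖. -/

import Mathlib

open MeasureTheory Complex
open scoped ENNReal ComplexOrder

noncomputable section


/-- The Euclidean norm on `ℂ²`. -/
def euclNorm (v : Fin 2 → ℂ) : ℝ :=
  Real.sqrt (‖v 0‖ ^ 2 + ‖v 1‖ ^ 2)

/-- The operator norm of a 2×2 complex matrix acting on Euclidean `ℂ²`. -/
def opNorm2 (A : Matrix (Fin 2) (Fin 2) ℂ) : ℝ :=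
  sSup {r : ℝ | ∃ v : Fin 2 → ℂ, euclNorm v ≤ 1 ∧ r = euclNorm (A.mulVec v)}

lemma euclNorm_nonneg (v : Fin 2 → ℂ) : 0 ≤ euclNorm v := Real.sqrt_nonneg _

-- Cauchy–Schwarz in 2 dims, nonneg reals
lemma cs2 {u v s t : ℝ} (hu : 0 ≤ u) (hv : 0 ≤ v) (hs : 0 ≤ s) (ht : 0 ≤ t) :
    u * s + v * t ≤ Real.sqrt (u ^ 2 + v ^ 2) * Real.sqrt (s ^ 2 + t ^ 2) := by
  rw [← Real.sqrt_mul (by positivity)]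
  rw [show Real.sqrt ((u^2+v^2)*(s^2+t^2)) = Real.sqrt ((u^2+v^2)*(s^2+t^2)) from rfl]
  have h : (u * s + v * t) ^ 2 ≤ (u ^ 2 + v ^ 2) * (s ^ 2 + t ^ 2) := by nlinarith [sq_nonneg (u*t - v*s)]
  calc u * s + v * t = Real.sqrt ((u*s+v*t)^2) := by rw [Real.sqrt_sq (by positivity)]
    _ ≤ _ := Real.sqrt_le_sqrt h

lemma mulVec_apply2 (B : Matrix (Fin 2) (Fin 2) ℂ) (v : Fin 2 → ℂ) (i : Fin 2) :
    B.mulVec v i = B i 0 * v 0 + B i 1 * v 1 := by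
  simp [Matrix.mulVec, dotProduct, Fin.sum_univ_two]

lemma row_bound (p q x y : ℂ) :
    ‖p * x + q * y‖
      ≤ Real.sqrt (‖p‖ ^ 2 + ‖q‖ ^ 2) * Real.sqrt (‖x‖ ^ 2 + ‖y‖ ^ 2) := by
  calc ‖p * x + q * y‖ ≤ ‖p*x‖ + ‖q*y‖ := norm_add_le _ _
    _ = ‖p‖ * ‖x‖ + ‖q‖ * ‖y‖ := by simp [norm_mul]
    _ ≤ _ := cs2 (by positivity) (by positivity) (by positivity) (by positivity)

lemma frob_bound (B : Matrix (Fin 2) (Fin 2) ℂ) (v : Fin 2 → ℂ) :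
    euclNorm (B.mulVec v) ≤
      Real.sqrt (‖B 0 0‖ ^ 2 + ‖B 0 1‖ ^ 2
        + (‖B 1 0‖ ^ 2 + ‖B 1 1‖ ^ 2)) * euclNorm v := by
  set n := euclNorm v with hn
  have hn0 : 0 ≤ n := euclNorm_nonneg v
  have h0 : ‖B.mulVec v 0‖ ≤ Real.sqrt (‖B 0 0‖ ^ 2 + ‖B 0 1‖ ^ 2) * n := by
    rw [mulVec_apply2]; exact row_bound _ _ _ _
  have h1 : ‖B.mulVec v 1‖ ≤ Real.sqrt (‖B 1 0‖ ^ 2 + ‖B 1 1‖ ^ 2) * n := by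
    rw [mulVec_apply2]; exact row_bound _ _ _ _
  have hs0 := Real.sq_sqrt (show (0:ℝ) ≤ ‖B 0 0‖ ^ 2 + ‖B 0 1‖ ^ 2 by positivity)
  have hs1 := Real.sq_sqrt (show (0:ℝ) ≤ ‖B 1 0‖ ^ 2 + ‖B 1 1‖ ^ 2 by positivity)
  rw [euclNorm, ← Real.sqrt_sq hn0, ← Real.sqrt_mul (by positivity)]
  apply Real.sqrt_le_sqrt
  nlinarith [norm_nonneg (B.mulVec v 0), norm_nonneg (B.mulVec v 1),
    Real.sqrt_nonneg (‖B 0 0‖ ^ 2 + ‖B 0 1‖ ^ 2),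
    Real.sqrt_nonneg (‖B 1 0‖ ^ 2 + ‖B 1 1‖ ^ 2),
    mul_le_mul h0 h0 (norm_nonneg _) (by positivity),
    mul_le_mul h1 h1 (norm_nonneg _) (by positivity)]

lemma opNorm2_bddAbove (B : Matrix (Fin 2) (Fin 2) ℂ) :
    BddAbove {r : ℝ | ∃ v : Fin 2 → ℂ, euclNorm v ≤ 1 ∧ r = euclNorm (B.mulVec v)} := by
  refine ⟨Real.sqrt (‖B 0 0‖ ^ 2 + ‖B 0 1‖ ^ 2
        + (‖B 1 0‖ ^ 2 + ‖B 1 1‖ ^ 2)), ?_⟩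
  rintro r ⟨v, hv, rfl⟩
  calc euclNorm (B.mulVec v) ≤ _ * euclNorm v := frob_bound B v
    _ ≤ _ * 1 := by apply mul_le_mul_of_nonneg_left hv (Real.sqrt_nonneg _)
    _ = _ := mul_one _

lemma opNorm2_le (B : Matrix (Fin 2) (Fin 2) ℂ) {C : ℝ} (hC : 0 ≤ C)
    (h : ∀ v, euclNorm (B.mulVec v) ≤ C * euclNorm v) : opNorm2 B ≤ C := by
  apply Real.sSup_le _ hC
  rintro r ⟨v, hv, rfl⟩
  calc euclNorm (B.mulVec v) ≤ C * euclNorm v := h v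
    _ ≤ C * 1 := mul_le_mul_of_nonneg_left hv hC
    _ = C := mul_one C

lemma le_opNorm2 (B : Matrix (Fin 2) (Fin 2) ℂ) (v : Fin 2 → ℂ) (hv : euclNorm v ≤ 1) :
    euclNorm (B.mulVec v) ≤ opNorm2 B :=
  le_csSup (opNorm2_bddAbove B) ⟨v, hv, rfl⟩

lemma opNorm2_nonneg (B : Matrix (Fin 2) (Fin 2) ℂ) : 0 ≤ opNorm2 B := by
  have h := le_opNorm2 B 0 (by simp [euclNorm])
  exact le_trans (euclNorm_nonneg _) h

lemma sqrt_le_mul_sqrt {a b m : ℝ} (hm : 0 ≤ m) (hb : 0 ≤ b) (h : a ≤ m ^ 2 * b) :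
    Real.sqrt a ≤ m * Real.sqrt b := by
  rw [← Real.sqrt_sq hm, ← Real.sqrt_mul (by positivity)]
  exact Real.sqrt_le_sqrt h

lemma abs_det_le (B : Matrix (Fin 2) (Fin 2) ℂ) : ‖B.det‖ ≤ opNorm2 B ^ 2 := by
  have hc0 : Real.sqrt (‖B 0 0‖ ^ 2 + ‖B 1 0‖ ^ 2) ≤ opNorm2 B := by
    have h := le_opNorm2 B ![1, 0] (by simp [euclNorm])
    have e : B.mulVec ![1, 0] = fun i => B i 0 := by
      funext i; rw [mulVec_apply2]; simp
    rw [e] at h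
    simpa [euclNorm] using h
  have hc1 : Real.sqrt (‖B 0 1‖ ^ 2 + ‖B 1 1‖ ^ 2) ≤ opNorm2 B := by
    have h := le_opNorm2 B ![0, 1] (by simp [euclNorm])
    have e : B.mulVec ![0, 1] = fun i => B i 1 := by
      funext i; rw [mulVec_apply2]; simp
    rw [e] at h
    simpa [euclNorm] using h
  rw [Matrix.det_fin_two]
  calc ‖B 0 0 * B 1 1 - B 0 1 * B 1 0‖
      ≤ ‖B 0 0 * B 1 1‖ + ‖B 0 1 * B 1 0‖ :=
        norm_sub_le _ _
    _ = ‖B 0 0‖ * ‖B 1 1‖ + ‖B 1 0‖ * ‖B 0 1‖ := by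
        rw [norm_mul, norm_mul]; ring
    _ ≤ Real.sqrt (‖B 0 0‖ ^ 2 + ‖B 1 0‖ ^ 2)
        * Real.sqrt (‖B 1 1‖ ^ 2 + ‖B 0 1‖ ^ 2) :=
        cs2 (by positivity) (by positivity) (by positivity) (by positivity)
    _ ≤ opNorm2 B ^ 2 := by
        rw [add_comm (‖B 1 1‖ ^ 2)]
        nlinarith [mul_le_mul hc0 hc1 (Real.sqrt_nonneg _) (opNorm2_nonneg B)]

lemma opNorm2_diag_le (x y : ℂ) (m : ℝ) (hx : ‖x‖ ≤ m) (hy : ‖y‖ ≤ m) :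
    opNorm2 !![x, 0; 0, y] ≤ m := by
  have hm : 0 ≤ m := le_trans (norm_nonneg x) hx
  apply opNorm2_le _ hm
  intro v
  have e : (!![x, 0; 0, y]).mulVec v = ![x * v 0, y * v 1] := by
    funext i; rw [mulVec_apply2]; fin_cases i <;> simp
  rw [e]
  show Real.sqrt _ ≤ m * Real.sqrt _
  simp only [Matrix.cons_val_zero, Matrix.cons_val_one, Matrix.head_cons]
  apply sqrt_le_mul_sqrt hm (by positivity)
  rw [norm_mul, norm_mul, mul_pow, mul_pow]
  have hx2 : ‖x‖ ^ 2 ≤ m ^ 2 := by nlinarith [norm_nonneg x]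
  have hy2 : ‖y‖ ^ 2 ≤ m ^ 2 := by nlinarith [norm_nonneg y]
  nlinarith [mul_le_mul_of_nonneg_right hx2 (sq_nonneg (‖v 0‖)),
    mul_le_mul_of_nonneg_right hy2 (sq_nonneg (‖v 1‖))]

lemma opNorm2_upper_le (t : ℂ) : opNorm2 !![0, t; 0, 0] ≤ ‖t‖ := by
  apply opNorm2_le _ (norm_nonneg t)
  intro v
  have e : (!![0, t; 0, 0]).mulVec v = ![t * v 1, 0] := by
    funext i; rw [mulVec_apply2]; fin_cases i <;> simp
  rw [e]
  show Real.sqrt _ ≤ ‖t‖ * Real.sqrt _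
  simp only [Matrix.cons_val_zero, Matrix.cons_val_one, Matrix.head_cons]
  apply sqrt_le_mul_sqrt (norm_nonneg t) (by positivity)
  rw [norm_mul, mul_pow, norm_zero]
  nlinarith [mul_nonneg (sq_nonneg (‖t‖)) (sq_nonneg (‖v 0‖))]

lemma conj_mem (A P B : Matrix (Fin 2) (Fin 2) ℂ) (hP : IsUnit P.det) (hAP : A * P = P * B) :
    opNorm2 B ∈ {r : ℝ | ∃ Ω : Matrix (Fin 2) (Fin 2) ℂ, IsUnit Ω ∧ r = opNorm2 (Ω * A * Ω⁻¹)} := by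
  refine ⟨P⁻¹, ?_, ?_⟩
  · rw [Matrix.isUnit_nonsing_inv_iff, Matrix.isUnit_iff_isUnit_det]; exact hP
  · rw [Matrix.nonsing_inv_nonsing_inv P hP, Matrix.mul_assoc, hAP, ← Matrix.mul_assoc,
      Matrix.nonsing_inv_mul P hP, Matrix.one_mul]

lemma det_conj (A Ω : Matrix (Fin 2) (Fin 2) ℂ) (hΩ : IsUnit Ω) :
    (Ω * A * Ω⁻¹).det = A.det := by
  have hd : IsUnit Ω.det := (Matrix.isUnit_iff_isUnit_det Ω).mp hΩ
  have hne : Ω.det ≠ 0 := hd.ne_zero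
  rw [Matrix.det_mul, Matrix.det_mul, Matrix.det_nonsing_inv, Ring.inverse_eq_inv']
  field_simp

lemma mul_eq_of_cols (A : Matrix (Fin 2) (Fin 2) ℂ) (x y x' y' : Fin 2 → ℂ)
    (hx : A.mulVec x = x') (hy : A.mulVec y = y') :
    A * !![x 0, y 0; x 1, y 1] = !![x' 0, y' 0; x' 1, y' 1] := by
  have hx0 : A 0 0 * x 0 + A 0 1 * x 1 = x' 0 := by rw [← mulVec_apply2, hx]
  have hx1 : A 1 0 * x 0 + A 1 1 * x 1 = x' 1 := by rw [← mulVec_apply2, hx]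
  have hy0 : A 0 0 * y 0 + A 0 1 * y 1 = y' 0 := by rw [← mulVec_apply2, hy]
  have hy1 : A 1 0 * y 0 + A 1 1 * y 1 = y' 1 := by rw [← mulVec_apply2, hy]
  ext i j
  fin_cases i <;> fin_cases j <;> simp [Matrix.mul_apply, Fin.sum_univ_two, hx0, hx1, hy0, hy1]

lemma nilpotent_case (A : Matrix (Fin 2) (Fin 2) ℂ) (hA2 : A * A = 0)
    (u : Fin 2 → ℂ) (hu : A.mulVec u ≠ 0) (ε : ℝ) (hε : 0 < ε) :
    ∃ r ∈ {r : ℝ | ∃ Ω : Matrix (Fin 2) (Fin 2) ℂ, IsUnit Ω ∧ r = opNorm2 (Ω * A * Ω⁻¹)},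
      r ≤ ε := by
  set v : Fin 2 → ℂ := A.mulVec u with hv
  have hAv : A.mulVec v = 0 := by
    rw [hv, Matrix.mulVec_mulVec, hA2, Matrix.zero_mulVec]
  obtain ⟨i0, hi0⟩ : ∃ i, v i ≠ 0 := by
    by_contra hc; push_neg at hc; exact hu (funext hc)
  set P : Matrix (Fin 2) (Fin 2) ℂ := !![v 0, u 0; v 1, u 1] with hP
  have hAP : A * P = !![(0:ℂ), v 0; 0, v 1] := by
    have := mul_eq_of_cols A v u 0 v hAv hv.symm
    simpa using this
  have hPdet : P.det ≠ 0 := by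
    intro hdp
    obtain ⟨w, hw0, hw⟩ := Matrix.exists_mulVec_eq_zero_iff.mpr hdp
    have e0 : v 0 * w 0 + u 0 * w 1 = 0 := by
      have := congrFun hw 0; rwa [mulVec_apply2] at this
    have e1 : v 1 * w 0 + u 1 * w 1 = 0 := by
      have := congrFun hw 1; rwa [mulVec_apply2] at this
    have hAPw : (A * P).mulVec w = 0 := by
      rw [← Matrix.mulVec_mulVec, hw, Matrix.mulVec_zero]
    rw [hAP] at hAPw
    have f0 : v 0 * w 1 = 0 := by
      have := congrFun hAPw 0; rw [mulVec_apply2] at this; simpa using this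
    have f1 : v 1 * w 1 = 0 := by
      have := congrFun hAPw 1; rw [mulVec_apply2] at this; simpa using this
    have hw1 : w 1 = 0 := by
      fin_cases i0
      · exact (mul_eq_zero.mp f0).resolve_left hi0
      · exact (mul_eq_zero.mp f1).resolve_left hi0
    have hw00 : w 0 = 0 := by
      rw [hw1, mul_zero, add_zero] at e0 e1
      fin_cases i0
      · exact (mul_eq_zero.mp e0).resolve_left hi0
      · exact (mul_eq_zero.mp e1).resolve_left hi0
    exact hw0 (by funext k; fin_cases k <;> assumption)
  set Q : Matrix (Fin 2) (Fin 2) ℂ := P * !![(ε:ℂ)⁻¹, 0; 0, 1] with hQ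
  have hεc : (ε : ℂ) ≠ 0 := by
    simp only [ne_eq, Complex.ofReal_eq_zero]; linarith
  have hQdet : IsUnit Q.det := by
    rw [isUnit_iff_ne_zero, hQ, Matrix.det_mul]
    apply mul_ne_zero hPdet
    rw [Matrix.det_fin_two_of]
    simpa using inv_ne_zero hεc
  have hE : !![(ε:ℂ)⁻¹, 0; 0, 1] * !![(0:ℂ), (ε:ℂ); 0, 0] = !![(0:ℂ), 1; 0, 0] := by
    ext i j
    fin_cases i <;> fin_cases j <;>
      simp [Matrix.mul_apply, Fin.sum_univ_two, inv_mul_cancel₀ hεc]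
  have hPN : P * !![(0:ℂ), 1; 0, 0] = !![(0:ℂ), v 0; 0, v 1] := by
    rw [hP]
    ext i j
    fin_cases i <;> fin_cases j <;> simp [Matrix.mul_apply, Fin.sum_univ_two]
  have hXE : !![(0:ℂ), v 0; 0, v 1] * !![(ε:ℂ)⁻¹, 0; 0, 1] = !![(0:ℂ), v 0; 0, v 1] := by
    ext i j
    fin_cases i <;> fin_cases j <;> simp [Matrix.mul_apply, Fin.sum_univ_two]
  have hAQ : A * Q = Q * !![(0:ℂ), (ε:ℂ); 0, 0] := by
    rw [hQ, ← Matrix.mul_assoc, hAP, hXE, Matrix.mul_assoc, hE, hPN]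
  refine ⟨opNorm2 !![(0:ℂ), (ε:ℂ); 0, 0], conj_mem A Q _ hQdet hAQ, ?_⟩
  calc opNorm2 !![(0:ℂ), (ε:ℂ); 0, 0] ≤ ‖(ε:ℂ)‖ := opNorm2_upper_le _
    _ = ε := by rw [Complex.norm_real, Real.norm_eq_abs, abs_of_pos hε]

lemma mul_eq_of_cols' (A : Matrix (Fin 2) (Fin 2) ℂ) (p q r s p' q' r' s' : ℂ)
    (h1 : A 0 0 * p + A 0 1 * r = p') (h2 : A 1 0 * p + A 1 1 * r = r')
    (h3 : A 0 0 * q + A 0 1 * s = q') (h4 : A 1 0 * q + A 1 1 * s = s') :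
    A * !![p, q; r, s] = !![p', q'; r', s'] := by
  ext i j
  fin_cases i <;> fin_cases j <;> simp [Matrix.mul_apply, Fin.sum_univ_two, h1, h2, h3, h4]

lemma diag_case (A : Matrix (Fin 2) (Fin 2) ℂ) (z : ℂ) (hd : A 1 1 = -A 0 0)
    (hz : z ^ 2 = A 0 0 ^ 2 + A 0 1 * A 1 0) (hzne : z ≠ 0) :
    ∃ r ∈ {r : ℝ | ∃ Ω : Matrix (Fin 2) (Fin 2) ℂ, IsUnit Ω ∧ r = opNorm2 (Ω * A * Ω⁻¹)},
      r ≤ ‖z‖ := by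
  have hDle : opNorm2 !![z, 0; 0, -z] ≤ ‖z‖ :=
    opNorm2_diag_le z (-z) (‖z‖) le_rfl (by rw [norm_neg])
  by_cases hb : A 0 1 = 0
  · by_cases hc : A 1 0 = 0
    · -- A is already diagonal
      rw [hb, zero_mul, add_zero] at hz
      have haz : ‖z‖ = ‖A 0 0‖ := by
        have h2 : ‖z‖ ^ 2 = ‖A 0 0‖ ^ 2 := by
          rw [← norm_pow, ← norm_pow, hz]
        calc ‖z‖ = Real.sqrt (‖z‖ ^ 2) :=
              (Real.sqrt_sq (norm_nonneg z)).symm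
          _ = Real.sqrt (‖A 0 0‖ ^ 2) := by rw [h2]
          _ = ‖A 0 0‖ := Real.sqrt_sq (norm_nonneg _)
      have hA : A = !![A 0 0, 0; 0, -A 0 0] := by
        conv_lhs => rw [Matrix.eta_fin_two A]
        rw [hb, hc, hd]
      refine ⟨opNorm2 ((1 : Matrix (Fin 2) (Fin 2) ℂ) * A * (1 : Matrix (Fin 2) (Fin 2) ℂ)⁻¹),
        ⟨1, isUnit_one, rfl⟩, ?_⟩
      rw [show (1 : Matrix (Fin 2) (Fin 2) ℂ) * A * (1 : Matrix (Fin 2) (Fin 2) ℂ)⁻¹ = A by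
        rw [inv_one, Matrix.one_mul, Matrix.mul_one]]
      have e : opNorm2 A = opNorm2 !![A 0 0, 0; 0, -A 0 0] := congrArg _ hA
      rw [e]
      exact opNorm2_diag_le _ _ _ (le_of_eq haz.symm) (by rw [norm_neg]; exact le_of_eq haz.symm)
    · -- c ≠ 0 case
      have h1 : A 0 0 * (z + A 0 0) + A 0 1 * A 1 0 = z * (z + A 0 0) := by
        linear_combination -hz
      have h2 : A 1 0 * (z + A 0 0) + A 1 1 * A 1 0 = z * A 1 0 := by rw [hd]; ring
      have h3 : A 0 0 * (-z + A 0 0) + A 0 1 * A 1 0 = -z * (-z + A 0 0) := by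
        linear_combination -hz
      have h4 : A 1 0 * (-z + A 0 0) + A 1 1 * A 1 0 = -z * A 1 0 := by rw [hd]; ring
      have hAP := mul_eq_of_cols' A (z + A 0 0) (-z + A 0 0) (A 1 0) (A 1 0) _ _ _ _ h1 h2 h3 h4
      have hPD : !![z + A 0 0, -z + A 0 0; A 1 0, A 1 0] * !![z, 0; 0, -z]
          = !![z * (z + A 0 0), -z * (-z + A 0 0); z * A 1 0, -z * A 1 0] := by
        ext i j
        fin_cases i <;> fin_cases j <;> simp [Matrix.mul_apply, Fin.sum_univ_two] <;> ring
      have hPdet : IsUnit (!![z + A 0 0, -z + A 0 0; A 1 0, A 1 0]).det := by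
        rw [isUnit_iff_ne_zero, Matrix.det_fin_two_of]
        intro h0
        exact mul_ne_zero hzne hc (by linear_combination (1/2 : ℂ) * h0)
      exact ⟨opNorm2 !![z, 0; 0, -z],
        conj_mem A _ _ hPdet (hAP.trans hPD.symm), hDle⟩
  · -- b ≠ 0 case
    have h1 : A 0 0 * A 0 1 + A 0 1 * (z - A 0 0) = z * A 0 1 := by ring
    have h2 : A 1 0 * A 0 1 + A 1 1 * (z - A 0 0) = z * (z - A 0 0) := by
      rw [hd]; linear_combination -hz
    have h3 : A 0 0 * A 0 1 + A 0 1 * (-z - A 0 0) = -z * A 0 1 := by ring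
    have h4 : A 1 0 * A 0 1 + A 1 1 * (-z - A 0 0) = -z * (-z - A 0 0) := by
      rw [hd]; linear_combination -hz
    have hAP := mul_eq_of_cols' A (A 0 1) (A 0 1) (z - A 0 0) (-z - A 0 0) _ _ _ _ h1 h2 h3 h4
    have hPD : !![A 0 1, A 0 1; z - A 0 0, -z - A 0 0] * !![z, 0; 0, -z]
        = !![z * A 0 1, -z * A 0 1; z * (z - A 0 0), -z * (-z - A 0 0)] := by
      ext i j
      fin_cases i <;> fin_cases j <;> simp [Matrix.mul_apply, Fin.sum_univ_two] <;> ring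
    have hPdet : IsUnit (!![A 0 1, A 0 1; z - A 0 0, -z - A 0 0]).det := by
      rw [isUnit_iff_ne_zero, Matrix.det_fin_two_of]
      intro h0
      exact mul_ne_zero hb hzne (by linear_combination (-1/2 : ℂ) * h0)
    exact ⟨opNorm2 !![z, 0; 0, -z],
      conj_mem A _ _ hPdet (hAP.trans hPD.symm), hDle⟩


theorem stmt7 (A : Matrix (Fin 2) (Fin 2) ℂ) (h : A.trace = 0) :
    Real.sqrt (‖A.det‖)
      = sInf {r : ℝ | ∃ Ω : Matrix (Fin 2) (Fin 2) ℂ, IsUnit Ω ∧ r = opNorm2 (Ω * A * Ω⁻¹)} := by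
  set S := {r : ℝ | ∃ Ω : Matrix (Fin 2) (Fin 2) ℂ, IsUnit Ω ∧ r = opNorm2 (Ω * A * Ω⁻¹)} with hS
  have hd : A 1 1 = -A 0 0 := by
    have ht : A 0 0 + A 1 1 = 0 := by rw [← Matrix.trace_fin_two, h]
    linear_combination ht
  obtain ⟨z, hz⟩ := IsAlgClosed.exists_pow_nat_eq (A 0 0 ^ 2 + A 0 1 * A 1 0) (n := 2)
    (by norm_num)
  have hdet : A.det = -(z ^ 2) := by
    rw [Matrix.det_fin_two, hd, hz]; ring
  have hsq : Real.sqrt (‖A.det‖) = ‖z‖ := by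
    rw [hdet, norm_neg, norm_pow, Real.sqrt_sq (norm_nonneg z)]
  have lb : ∀ r ∈ S, Real.sqrt (‖A.det‖) ≤ r := by
    rintro r ⟨Ω, hΩ, rfl⟩
    have h1 := abs_det_le (Ω * A * Ω⁻¹)
    rw [det_conj A Ω hΩ] at h1
    calc Real.sqrt (‖A.det‖) ≤ Real.sqrt (opNorm2 (Ω * A * Ω⁻¹) ^ 2) :=
        Real.sqrt_le_sqrt h1
      _ = opNorm2 (Ω * A * Ω⁻¹) := Real.sqrt_sq (opNorm2_nonneg _)
  have hne : S.Nonempty :=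
    ⟨opNorm2 ((1 : Matrix (Fin 2) (Fin 2) ℂ) * A * (1 : Matrix (Fin 2) (Fin 2) ℂ)⁻¹),
      1, isUnit_one, rfl⟩
  have hbdd : BddBelow S := ⟨_, lb⟩
  refine le_antisymm (le_csInf hne lb) ?_
  by_cases hdet0 : A.det = 0
  · rw [hdet0, norm_zero, Real.sqrt_zero]
    by_cases hA0 : A = 0
    · have hm : opNorm2 ((1 : Matrix (Fin 2) (Fin 2) ℂ) * A * (1 : Matrix (Fin 2) (Fin 2) ℂ)⁻¹) ∈ S :=
        ⟨1, isUnit_one, rfl⟩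
      have hle0 : opNorm2 ((1 : Matrix (Fin 2) (Fin 2) ℂ) * A * (1 : Matrix (Fin 2) (Fin 2) ℂ)⁻¹) ≤ 0 := by
        rw [hA0, Matrix.mul_zero, Matrix.zero_mul]
        apply opNorm2_le _ le_rfl
        intro v
        rw [Matrix.zero_mulVec]
        simp [euclNorm]
      exact le_trans (csInf_le hbdd hm) hle0
    · have hac : A 0 0 ^ 2 + A 0 1 * A 1 0 = 0 := by
        have hdf : A 0 0 * A 1 1 - A 0 1 * A 1 0 = 0 := by
          rw [← Matrix.det_fin_two]; exact hdet0
        rw [hd] at hdf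
        linear_combination -hdf
      have hA2 : A * A = 0 := by
        ext i j
        fin_cases i <;> fin_cases j <;>
          simp [Matrix.mul_apply, Fin.sum_univ_two, hd] <;>
          (first | linear_combination hac | linear_combination 2 * hac | linear_combination -hac | linear_combination -2 * hac | ring)
      obtain ⟨i, j, hij⟩ : ∃ i j, A i j ≠ 0 := by
        by_contra hcon
        push_neg at hcon
        exact hA0 (by ext i j; exact hcon i j)
      have hu : A.mulVec (fun k => if k = j then (1 : ℂ) else 0) ≠ 0 := by
        intro hzero
        apply hij
        have h2 := congrFun hzero i
        rw [mulVec_apply2] at h2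
        fin_cases j <;> simpa using h2
      by_contra hlt
      push_neg at hlt
      obtain ⟨r, hrS, hrle⟩ := nilpotent_case A hA2 _ hu (sInf S / 2) (by linarith)
      have := csInf_le hbdd hrS
      linarith
  · have hzne : z ≠ 0 := by
      intro h0
      exact hdet0 (by rw [hdet, h0]; ring)
    obtain ⟨r, hrS, hrle⟩ := diag_case A z hd hz hzne
    rw [hsq]
    exact le_trans (csInf_le hbdd hrS) hrle

end
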